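/- Under the dyadic fixed-effects setup with n ≥ 3, there is at most one α ∈ D satisfying Σ_{j≠i} p_{ij}(α) = d_i for every i = 1, …, n; equivalently, the map r has at most one fixed point in D. (Uniqueness of the solution to the degree moment equations; uniqueness part of Theorem 3.1.) -/

import Mathlib

open Finset

/-- Uniqueness of the solution to the degree moment equations
(uniqueness part of Theorem 3.1). -/
theorem degree_moment_equations_unique_root
    (n K : ℕ) (hn : 3 ≤ n) (hK : 1 ≤ K)
    (c₁ c₂ : ℝ) (hc₁ : c₁ ∈ Set.Ioc (0 : ℝ) (1 / 2)) (hc₂ : c₂ ∈ Set.Ioc (0 : ℝ) (1 / 2))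
    (F f : ℝ → ℝ) (hFf : ∀ t : ℝ, HasDerivAt F (f t) t)
    (β : Fin K → ℝ) (x : Fin n → Fin n → Fin K → ℝ) (d : Fin n → ℝ)
    (D : Set (Fin n → ℝ)) (hDne : D.Nonempty) (hDconv : Convex ℝ D)
    (hFbound : ∀ α ∈ D, ∀ i j : Fin n, i ≠ j →
      F (α i + ∑ k, x i j k * β k) ∈ Set.Icc c₁ (1 - c₁))
    (hfbound : ∀ α ∈ D, ∀ i j : Fin n, i ≠ j →
      f (α i + ∑ k, x i j k * β k) ∈ Set.Icc c₂ (1 - c₂))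
    (α α' : Fin n → ℝ) (hα : α ∈ D) (hα' : α' ∈ D)
    (hroot : ∀ i : Fin n,
      ∑ j ∈ univ.erase i,
        F (α i + ∑ k, x i j k * β k) * F (α j + ∑ k, x j i k * β k) = d i)
    (hroot' : ∀ i : Fin n,
      ∑ j ∈ univ.erase i,
        F (α' i + ∑ k, x i j k * β k) * F (α' j + ∑ k, x j i k * β k) = d i) :
    α = α' := by
  classical
  obtain ⟨hc₁0, hc₁h⟩ := hc₁
  obtain ⟨hc₂0, hc₂h⟩ := hc₂
  have hFcont : Continuous F := by
    rw [continuous_iff_continuousAt]; exact fun t => (hFf t).continuousAt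
  -- Mean value theorem step
  have key : ∀ i j : Fin n, i ≠ j → ∃ e : ℝ, c₂ ≤ e ∧
      F (α i + ∑ k, x i j k * β k) - F (α' i + ∑ k, x i j k * β k) = e * (α i - α' i) := by
    intro i j hij
    set s := ∑ k, x i j k * β k with hs
    set ψ : ℝ → ℝ := fun t => (α i - α' i) * t + (α' i + s) with hψ
    have hψd : ∀ t : ℝ, HasDerivAt ψ (α i - α' i) t := by
      intro t
      simpa [hψ] using ((hasDerivAt_id t).const_mul (α i - α' i)).add_const (α' i + s)
    have hd : ∀ t : ℝ, HasDerivAt (fun u => F (ψ u)) (f (ψ t) * (α i - α' i)) t :=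
      fun t => (hFf (ψ t)).comp t (hψd t)
    obtain ⟨c, hc, hcd⟩ := exists_hasDerivAt_eq_slope (fun u => F (ψ u))
      (fun t => f (ψ t) * (α i - α' i)) one_pos
      ((hFcont.comp (by fun_prop)).continuousOn)
      (fun t _ => hd t)
    refine ⟨f (ψ c), ?_, ?_⟩
    · have hz : ((1 - c) • α' + c • α : Fin n → ℝ) ∈ D :=
        hDconv hα' hα (by linarith [hc.2]) (le_of_lt hc.1) (by ring)
      have hb := (hfbound _ hz i j hij).1
      have harg : ((1 - c) • α' + c • α) i + ∑ k, x i j k * β k = ψ c := by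
        simp only [Pi.add_apply, Pi.smul_apply, smul_eq_mul, hψ, ← hs]
        ring
      rwa [harg] at hb
    · have h1 : ψ 1 = α i + s := by simp [hψ]; ring
      have h0 : ψ 0 = α' i + s := by simp [hψ]
      simp only [h1, h0] at hcd
      linarith [hcd]
  choose! e he using key
  -- the coefficient matrix
  set A : Fin n → Fin n → ℝ := fun i j =>
    (F (α j + ∑ k, x j i k * β k) + F (α' j + ∑ k, x j i k * β k)) / 2 * e i j with hA
  have hApos : ∀ i j : Fin n, i ≠ j → 0 < A i j := by
    intro i j hij
    have h1 := (hFbound α hα j i hij.symm).1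
    have h2 := (hFbound α' hα' j i hij.symm).1
    have h3 := (he i j hij).1
    simp only [hA]
    nlinarith
  -- per-term identity
  have hterm : ∀ i j : Fin n, i ≠ j →
      F (α i + ∑ k, x i j k * β k) * F (α j + ∑ k, x j i k * β k)
        - F (α' i + ∑ k, x i j k * β k) * F (α' j + ∑ k, x j i k * β k)
      = A i j * (α i - α' i) + A j i * (α j - α' j) := by
    intro i j hij
    have h1 := (he i j hij).2
    have h2 := (he j i hij.symm).2
    simp only [hA]
    linear_combination ((F (α j + ∑ k, x j i k * β k) + F (α' j + ∑ k, x j i k * β k)) / 2) * h1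
      + ((F (α i + ∑ k, x i j k * β k) + F (α' i + ∑ k, x i j k * β k)) / 2) * h2
  -- the linear equations
  have Eq : ∀ i : Fin n,
      (∑ j ∈ univ.erase i, A i j) * (α i - α' i)
        + ∑ j ∈ univ.erase i, A j i * (α j - α' j) = 0 := by
    intro i
    have h3 : ∑ j ∈ univ.erase i,
        (F (α i + ∑ k, x i j k * β k) * F (α j + ∑ k, x j i k * β k)
          - F (α' i + ∑ k, x i j k * β k) * F (α' j + ∑ k, x j i k * β k)) = 0 := by
      rw [Finset.sum_sub_distrib, hroot i, hroot' i, sub_self]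
    have h4 : ∑ j ∈ univ.erase i,
        (A i j * (α i - α' i) + A j i * (α j - α' j)) = 0 := by
      rw [← h3]
      exact Finset.sum_congr rfl fun j hj =>
        (hterm i j (Finset.ne_of_mem_erase hj).symm).symm
    rw [Finset.sum_add_distrib, ← Finset.sum_mul] at h4
    exact h4
  -- swap lemma
  have hswap : ∀ g : Fin n → Fin n → ℝ,
      ∑ i : Fin n, ∑ j ∈ univ.erase i, g i j = ∑ i : Fin n, ∑ j ∈ univ.erase i, g j i := by
    intro g
    have h1 : ∀ i : Fin n, ∑ j ∈ univ.erase i, g i j = (∑ j, g i j) - g i i :=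
      fun i => Finset.sum_erase_eq_sub (Finset.mem_univ i)
    have h2 : ∀ i : Fin n, ∑ j ∈ univ.erase i, g j i = (∑ j, g j i) - g i i :=
      fun i => Finset.sum_erase_eq_sub (f := fun j => g j i) (Finset.mem_univ i)
    calc ∑ i : Fin n, ∑ j ∈ univ.erase i, g i j
        = ∑ i : Fin n, ((∑ j, g i j) - g i i) := Finset.sum_congr rfl fun i _ => h1 i
      _ = (∑ i : Fin n, ∑ j, g i j) - ∑ i : Fin n, g i i := Finset.sum_sub_distrib _ _
      _ = (∑ i : Fin n, ∑ j, g j i) - ∑ i : Fin n, g i i := by rw [Finset.sum_comm]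
      _ = ∑ i : Fin n, ((∑ j, g j i) - g i i) := (Finset.sum_sub_distrib _ _).symm
      _ = ∑ i : Fin n, ∑ j ∈ univ.erase i, g j i := Finset.sum_congr rfl fun i _ => (h2 i).symm
  set R : Fin n → ℝ := fun i => ∑ j ∈ univ.erase i, A i j with hR
  have hcard : ∀ i : Fin n, (univ.erase i).Nonempty := by
    intro i
    rw [← Finset.card_pos, Finset.card_erase_of_mem (Finset.mem_univ i), Finset.card_univ,
      Fintype.card_fin]
    omega
  have hRpos : ∀ i : Fin n, 0 < R i := by
    intro i
    exact Finset.sum_pos (fun j hj => hApos i j (Finset.ne_of_mem_erase hj).symm) (hcard i)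
  have EqR : ∀ i : Fin n, R i * (α i - α' i) = - ∑ j ∈ univ.erase i, A j i * (α j - α' j) := by
    intro i; have := Eq i; simp only [hR]; linarith [this]
  -- sum of R i * Δ i is zero
  have sum0 : ∑ i : Fin n, R i * (α i - α' i) = 0 := by
    have t1 : ∑ i : Fin n, ∑ j ∈ univ.erase i, A j i * (α j - α' j)
        = ∑ i : Fin n, R i * (α i - α' i) := by
      rw [hswap (fun i j => A j i * (α j - α' j))]
      refine Finset.sum_congr rfl fun i _ => ?_
      simp only [hR]
      rw [Finset.sum_mul]
    have t2 : ∑ i : Fin n, (R i * (α i - α' i) + ∑ j ∈ univ.erase i, A j i * (α j - α' j)) = 0 :=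
      Finset.sum_eq_zero fun i _ => by
        have := Eq i; simp only [hR]; linarith [this]
    rw [Finset.sum_add_distrib, t1] at t2
    linarith [t2]
  -- absolute value inequality per row, and total equality
  have habs : ∀ i : Fin n, R i * |α i - α' i| ≤ ∑ j ∈ univ.erase i, A j i * |α j - α' j| := by
    intro i
    have h1 : R i * |α i - α' i| = |R i * (α i - α' i)| := by
      rw [abs_mul, abs_of_pos (hRpos i)]
    rw [h1, EqR i, abs_neg]
    refine (Finset.abs_sum_le_sum_abs _ _).trans ?_
    refine Finset.sum_le_sum fun j hj => ?_
    rw [abs_mul, abs_of_pos (hApos j i (Finset.ne_of_mem_erase hj))]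
  have hsumeq : ∑ i : Fin n, R i * |α i - α' i|
      = ∑ i : Fin n, ∑ j ∈ univ.erase i, A j i * |α j - α' j| := by
    rw [hswap (fun i j => A j i * |α j - α' j|)]
    refine Finset.sum_congr rfl fun i _ => ?_
    simp only [hR]
    rw [Finset.sum_mul]
  have heq : ∀ i : Fin n, R i * |α i - α' i| = ∑ j ∈ univ.erase i, A j i * |α j - α' j| := by
    intro i
    by_contra h
    have hlt := lt_of_le_of_ne (habs i) h
    have : ∑ i : Fin n, R i * |α i - α' i|
        < ∑ i : Fin n, ∑ j ∈ univ.erase i, A j i * |α j - α' j| :=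
      Finset.sum_lt_sum (fun j _ => habs j) ⟨i, Finset.mem_univ i, hlt⟩
    exact absurd hsumeq (ne_of_lt this)
  -- now conclude
  by_contra hne
  have hex : ∃ i : Fin n, α i - α' i ≠ 0 := by
    by_contra h
    push_neg at h
    exact hne (funext fun i => by have := h i; linarith)
  obtain ⟨i₀, hi₀⟩ := hex
  have hallzero : (∀ i : Fin n, α i - α' i ≤ 0) → False := by
    intro h
    have hz : ∀ i ∈ (univ : Finset (Fin n)), -(R i * (α i - α' i)) = 0 := by
      refine (Finset.sum_eq_zero_iff_of_nonneg fun i _ =>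
        neg_nonneg.mpr (mul_nonpos_iff.mpr (Or.inl ⟨(hRpos i).le, h i⟩))).mp ?_
      rw [Finset.sum_neg_distrib, sum0, neg_zero]
    have := hz i₀ (Finset.mem_univ i₀)
    have hne0 : R i₀ * (α i₀ - α' i₀) = 0 := by linarith
    rcases mul_eq_zero.mp hne0 with h' | h'
    · exact absurd h' (ne_of_gt (hRpos i₀))
    · exact hi₀ h'
  have hallzero' : (∀ i : Fin n, 0 ≤ α i - α' i) → False := by
    intro h
    have hz : ∀ i ∈ (univ : Finset (Fin n)), R i * (α i - α' i) = 0 :=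
      (Finset.sum_eq_zero_iff_of_nonneg fun i _ =>
        mul_nonneg (hRpos i).le (h i)).mp sum0
    have hne0 := hz i₀ (Finset.mem_univ i₀)
    rcases mul_eq_zero.mp hne0 with h' | h'
    · exact absurd h' (ne_of_gt (hRpos i₀))
    · exact hi₀ h'
  have hp : ∃ p : Fin n, 0 < α p - α' p := by
    by_contra h
    push_neg at h
    exact hallzero h
  have hq : ∃ q : Fin n, α q - α' q < 0 := by
    by_contra h
    push_neg at h
    exact hallzero' h
  obtain ⟨p, hpΔ⟩ := hp
  obtain ⟨q, hqΔ⟩ := hq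
  have hpq : p ≠ q := fun h => by rw [h] at hpΔ; linarith
  have hk : ∃ k : Fin n, k ≠ p ∧ k ≠ q := by
    by_contra h
    push_neg at h
    have hsub : (univ : Finset (Fin n)) ⊆ {p, q} := by
      intro k _
      rcases eq_or_ne k p with h' | h'
      · simp [h']
      · simp [h k h']
    have h2 : ({p, q} : Finset (Fin n)).card ≤ 2 :=
      (Finset.card_insert_le p {q}).trans (by simp)
    have h3 := Finset.card_le_card hsub
    rw [Finset.card_univ, Fintype.card_fin] at h3
    omega
  obtain ⟨k, hkp, hkq⟩ := hk
  have hpk : p ∈ univ.erase k := Finset.mem_erase.mpr ⟨fun h => hkp h.symm, Finset.mem_univ p⟩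
  have hqk : q ∈ univ.erase k := Finset.mem_erase.mpr ⟨fun h => hkq h.symm, Finset.mem_univ q⟩
  -- strict inequality at k
  have hub : ∑ j ∈ univ.erase k, A j k * (α j - α' j)
      < ∑ j ∈ univ.erase k, A j k * |α j - α' j| := by
    refine Finset.sum_lt_sum (fun j hj => mul_le_mul_of_nonneg_left (le_abs_self _)
      (hApos j k (Finset.ne_of_mem_erase hj)).le) ⟨q, hqk, ?_⟩
    have hA' := hApos q k (Finset.ne_of_mem_erase hqk)
    have : α q - α' q < |α q - α' q| := by rw [abs_of_neg hqΔ]; linarith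
    exact mul_lt_mul_of_pos_left this hA'
  have hlb : -(∑ j ∈ univ.erase k, A j k * |α j - α' j|)
      < ∑ j ∈ univ.erase k, A j k * (α j - α' j) := by
    rw [← Finset.sum_neg_distrib]
    refine Finset.sum_lt_sum (fun j hj => ?_) ⟨p, hpk, ?_⟩
    · have := mul_le_mul_of_nonneg_left (neg_abs_le (α j - α' j))
        (hApos j k (Finset.ne_of_mem_erase hj)).le
      rw [mul_neg] at this
      exact this
    · have hA' := hApos p k (Finset.ne_of_mem_erase hpk)
      have : -|α p - α' p| < α p - α' p := by rw [abs_of_pos hpΔ]; linarith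
      have h2 := mul_lt_mul_of_pos_left this hA'
      rw [mul_neg] at h2
      exact h2
  have hstrict : |∑ j ∈ univ.erase k, A j k * (α j - α' j)|
      < ∑ j ∈ univ.erase k, A j k * |α j - α' j| := abs_lt.mpr ⟨hlb, hub⟩
  have hcontr : R k * |α k - α' k| < ∑ j ∈ univ.erase k, A j k * |α j - α' j| := by
    have h1 : R k * |α k - α' k| = |R k * (α k - α' k)| := by
      rw [abs_mul, abs_of_pos (hRpos k)]
    rw [h1, EqR k, abs_neg]
    exact hstrict
  exact absurd (heq k) (ne_of_lt hcontr)
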